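/- Let R be a universal R-matrix for H with Drinfeld u-operator u. Then u⊗u commutes with τ(R)·R in the algebra H⊗H: (u⊗u)·(τ(R)·R) = (τ(R)·R)·(u⊗u). -/

import Mathlib

open TensorProduct

noncomputable section

variable (k H : Type*) [CommRing k] [Ring H] [HopfAlgebra k H]

/-- The k-linear swap `τ : H ⊗ H → H ⊗ H`, `x ⊗ y ↦ y ⊗ x`. -/
def tau : H ⊗[k] H →ₗ[k] H ⊗[k] H := (TensorProduct.comm k H H).toLinearMap

/-- The opposite comultiplication `Δᵀ := τ ∘ Δ`. -/
def DeltaT : H →ₗ[k] H ⊗[k] H := tau k H ∘ₗ Coalgebra.comul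

/-- Embedding of `H ⊗ H` into slots (1,2) of `H ⊗ (H ⊗ H)`: `x ⊗ y ↦ x ⊗ y ⊗ 1`. -/
def emb12 : H ⊗[k] H →ₐ[k] H ⊗[k] (H ⊗[k] H) :=
  Algebra.TensorProduct.map (AlgHom.id k H) Algebra.TensorProduct.includeLeft

/-- Embedding of `H ⊗ H` into slots (1,3) of `H ⊗ (H ⊗ H)`: `x ⊗ y ↦ x ⊗ 1 ⊗ y`. -/
def emb13 : H ⊗[k] H →ₐ[k] H ⊗[k] (H ⊗[k] H) :=
  Algebra.TensorProduct.map (AlgHom.id k H) Algebra.TensorProduct.includeRight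

/-- Embedding of `H ⊗ H` into slots (2,3) of `H ⊗ (H ⊗ H)`: `x ⊗ y ↦ 1 ⊗ x ⊗ y`. -/
def emb23 : H ⊗[k] H →ₐ[k] H ⊗[k] (H ⊗[k] H) :=
  Algebra.TensorProduct.includeRight

/-- The map `Δ ⊗ id : H ⊗ H → H ⊗ (H ⊗ H)`. -/
def DeltaId : H ⊗[k] H →ₗ[k] H ⊗[k] (H ⊗[k] H) :=
  (TensorProduct.assoc k H H H).toLinearMap ∘ₗ
    TensorProduct.map Coalgebra.comul LinearMap.id

/-- The map `id ⊗ Δ : H ⊗ H → H ⊗ (H ⊗ H)`. -/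
def IdDelta : H ⊗[k] H →ₗ[k] H ⊗[k] (H ⊗[k] H) :=
  TensorProduct.map LinearMap.id Coalgebra.comul

/-- `R` is a universal R-matrix: it is invertible, satisfies the two hexagon
relations `(Δ⊗id)R = R₁₃R₂₃`, `(id⊗Δ)R = R₁₃R₁₂`, and intertwines `Δ` with `Δᵀ`. -/
structure IsUniversalRMatrix (R : H ⊗[k] H) : Prop where
  isUnit : IsUnit R
  hexagon1 : DeltaId k H R = emb13 k H R * emb23 k H R
  hexagon2 : IdDelta k H R = emb13 k H R * emb12 k H R
  intertwine : ∀ a : H, R * Coalgebra.comul a = DeltaT k H a * R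

/-- The Drinfeld u-operator `u = m ((S ⊗ id) (τ R))`. -/
def uOp (R : H ⊗[k] H) : H :=
  LinearMap.mul' k H
    (TensorProduct.map (HopfAlgebra.antipode (R := k)) LinearMap.id (tau k H R))

open Coalgebra HopfAlgebra

local notation "𝒮" => (HopfAlgebra.antipode (R := k) (A := H))
local notation "ε" => (Coalgebra.counit (R := k) (A := H))

variable {k H}

lemma repr_counit_right {a : H} {ι : Type*} (X : Repr k a ι) :
    ∑ i ∈ X.index, ε (X.right i) • X.left i = a := by
  have h := sum_tmul_counit_eq X
  apply_fun (TensorProduct.rid k H) at h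
  simp only [map_sum, TensorProduct.rid_tmul, one_smul] at h
  exact h

lemma repr_counit_left {a : H} {ι : Type*} (X : Repr k a ι) :
    ∑ i ∈ X.index, ε (X.left i) • X.right i = a := by
  have h := sum_counit_tmul_eq X
  apply_fun (TensorProduct.lid k H) at h
  simp only [map_sum, TensorProduct.lid_tmul, one_smul] at h
  exact h

lemma antipode_one' : 𝒮 (1 : H) = 1 := by
  have h := HopfAlgebra.mul_antipode_rTensor_comul_apply (R := k) (1 : H)
  simpa [Bialgebra.comul_one, Algebra.TensorProduct.one_def,
    LinearMap.mul'_apply] using h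

/-- Make a `Repr` of `a*b` from reprs of `a` and `b`. -/
def Repr.mul {a b : H} {ι κ : Type*} (A : Repr k a ι) (B : Repr k b κ) :
    Repr k (a * b) (ι × κ) where
  index := A.index ×ˢ B.index
  left := fun z => A.left z.1 * B.left z.2
  right := fun z => A.right z.1 * B.right z.2
  eq := by
    rw [Finset.sum_product]
    rw [show CoalgebraStruct.comul (R := k) (a * b) = Bialgebra.comulAlgHom k H (a*b) from rfl,
      map_mul]
    have ha : (Bialgebra.comulAlgHom k H) a = ∑ i ∈ A.index, A.left i ⊗ₜ[k] A.right i := A.eq.symm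
    have hb : (Bialgebra.comulAlgHom k H) b = ∑ j ∈ B.index, B.left j ⊗ₜ[k] B.right j := B.eq.symm
    rw [ha, hb, Finset.sum_mul_sum]
    simp [Algebra.TensorProduct.tmul_mul_tmul]

lemma sum_antipode_mul_prod {a b : H} {ι κ : Type*} (A : Repr k a ι) (B : Repr k b κ) :
    ∑ j ∈ A.index, ∑ q ∈ B.index,
      𝒮 (A.left j * B.left q) * (A.right j * B.right q) = ε (a * b) • 1 := by
  have h := sum_antipode_mul_eq_smul (_root_.Repr.mul A B)
  rw [← h]
  simp only [_root_.Repr.mul, Finset.sum_product]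

lemma sum4_swap {ia ib : Type*} {ka : ia → Type*} {kb : ib → Type*} {M : Type*} [AddCommMonoid M]
    (s : Finset ia) (t : Finset ib) (u : ∀ a, Finset (ka a)) (v : ∀ b, Finset (kb b))
    (f : (a : ia) → ka a → (b : ib) → kb b → M) :
    ∑ a ∈ s, ∑ c ∈ u a, ∑ b ∈ t, ∑ d ∈ v b, f a c b d =
    ∑ b ∈ t, ∑ d ∈ v b, ∑ a ∈ s, ∑ c ∈ u a, f a c b d := by
  calc ∑ a ∈ s, ∑ c ∈ u a, ∑ b ∈ t, ∑ d ∈ v b, f a c b d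
      = ∑ a ∈ s, ∑ b ∈ t, ∑ c ∈ u a, ∑ d ∈ v b, f a c b d :=
        Finset.sum_congr rfl fun a _ => Finset.sum_comm
    _ = ∑ b ∈ t, ∑ a ∈ s, ∑ c ∈ u a, ∑ d ∈ v b, f a c b d := Finset.sum_comm
    _ = ∑ b ∈ t, ∑ a ∈ s, ∑ d ∈ v b, ∑ c ∈ u a, f a c b d :=
        Finset.sum_congr rfl fun b _ => Finset.sum_congr rfl fun a _ => Finset.sum_comm
    _ = ∑ b ∈ t, ∑ d ∈ v b, ∑ a ∈ s, ∑ c ∈ u a, f a c b d :=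
        Finset.sum_congr rfl fun b _ => Finset.sum_comm

lemma antipode_mul' (x y : H) : 𝒮 (x * y) = 𝒮 y * 𝒮 x := by
  classical
  set X := ℛ k x with hX
  set Y := ℛ k y with hY
  set X1 : (i : X.ι) → Repr k (X.left i) (H × H) := fun i => ℛ k (X.left i) with hX1
  set X2 : (i : X.ι) → Repr k (X.right i) (H × H) := fun i => ℛ k (X.right i) with hX2
  set Y1 : (p : Y.ι) → Repr k (Y.left p) (H × H) := fun p => ℛ k (Y.left p) with hY1
  set Y2 : (p : Y.ι) → Repr k (Y.right p) (H × H) := fun p => ℛ k (Y.right p) with hY2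
  -- the two "evaluator" linear maps
  set Lx : H ⊗[k] (H ⊗[k] H) →ₗ[k] H :=
    ∑ p ∈ Y.index, ∑ q ∈ (Y2 p).index,
      (LinearMap.mul' k H) ∘ₗ
        (TensorProduct.map (𝒮 ∘ₗ LinearMap.mulRight k (Y.left p))
          ((LinearMap.mul' k H) ∘ₗ
            TensorProduct.map
              (LinearMap.mulRight k ((Y2 p).left q * 𝒮 ((Y2 p).right q))) 𝒮)) with hLx
  have Lx_apply : ∀ α β γ : H, Lx (α ⊗ₜ[k] (β ⊗ₜ[k] γ)) =
      ∑ p ∈ Y.index, ∑ q ∈ (Y2 p).index,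
        𝒮 (α * Y.left p) * ((β * ((Y2 p).left q * 𝒮 ((Y2 p).right q))) * 𝒮 γ) := by
    intro α β γ
    simp [hLx, LinearMap.sum_apply, LinearMap.mul'_apply]
    simp only [mul_assoc]
  set Ly : H ⊗[k] (H ⊗[k] H) →ₗ[k] H :=
    ∑ i ∈ X.index, ∑ j ∈ (X1 i).index,
      (LinearMap.mul' k H) ∘ₗ
        (TensorProduct.map (𝒮 ∘ₗ LinearMap.mulLeft k ((X1 i).left j))
          (LinearMap.mulLeft k ((X1 i).right j) ∘ₗ
            LinearMap.mulRight k (𝒮 (X.right i)) ∘ₗ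
            (LinearMap.mul' k H) ∘ₗ TensorProduct.map LinearMap.id 𝒮)) with hLy
  have Ly_apply : ∀ α β γ : H, Ly (α ⊗ₜ[k] (β ⊗ₜ[k] γ)) =
      ∑ i ∈ X.index, ∑ j ∈ (X1 i).index,
        𝒮 ((X1 i).left j * α) * ((X1 i).right j * ((β * 𝒮 γ) * 𝒮 (X.right i))) := by
    intro α β γ
    simp [hLy, LinearMap.sum_apply, LinearMap.mul'_apply, mul_assoc]
  have hx := sum_tmul_tmul_eq X X1 X2
  have hy := sum_tmul_tmul_eq Y Y1 Y2
  -- Route 1 : Lx of the (id ⊗ Δ)Δ-side equals 𝒮 (x*y)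
  have e1 : Lx (∑ i ∈ X.index, ∑ j ∈ (X2 i).index,
      X.left i ⊗ₜ[k] ((X2 i).left j ⊗ₜ[k] (X2 i).right j)) = 𝒮 (x * y) := by
    rw [map_sum]
    simp only [map_sum, Lx_apply]
    have step : ∀ i ∈ X.index,
        ∑ j ∈ (X2 i).index, ∑ p ∈ Y.index, ∑ q ∈ (Y2 p).index,
          𝒮 (X.left i * Y.left p) * (((X2 i).left j * ((Y2 p).left q * 𝒮 ((Y2 p).right q))) *
            𝒮 ((X2 i).right j)) =
        ∑ p ∈ Y.index, (ε (Y.right p) * ε (X.right i)) • 𝒮 (X.left i * Y.left p) := by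
      intro i _
      rw [Finset.sum_comm]
      refine Finset.sum_congr rfl (fun p _ => ?_)
      have inner : ∀ j ∈ (X2 i).index,
          ∑ q ∈ (Y2 p).index,
            𝒮 (X.left i * Y.left p) * (((X2 i).left j * ((Y2 p).left q * 𝒮 ((Y2 p).right q))) *
              𝒮 ((X2 i).right j)) =
          ε (Y.right p) • (𝒮 (X.left i * Y.left p) *
            ((X2 i).left j * 𝒮 ((X2 i).right j))) := by
        intro j _
        rw [← Finset.mul_sum, ← Finset.sum_mul, ← Finset.mul_sum,
          sum_mul_antipode_eq_smul (Y2 p)]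
        simp [mul_smul_comm, smul_mul_assoc]
      rw [Finset.sum_congr rfl inner, ← Finset.smul_sum, ← Finset.mul_sum,
        sum_mul_antipode_eq_smul (X2 i)]
      simp [mul_smul_comm, smul_smul]
    rw [Finset.sum_congr rfl step]
    have : 𝒮 (x * y) = 𝒮 ((∑ i ∈ X.index, ε (X.right i) • X.left i) *
        (∑ p ∈ Y.index, ε (Y.right p) • Y.left p)) := by
      rw [repr_counit_right X, repr_counit_right Y]
    rw [this, Finset.sum_mul]
    simp only [Finset.mul_sum, map_sum, smul_mul_assoc, mul_smul_comm, map_smul]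
    refine Finset.sum_congr rfl (fun i _ => Finset.sum_congr rfl (fun p _ => ?_))
    rw [smul_comm, mul_comm (ε (Y.right p)) (ε (X.right i)), mul_smul]
  -- middle : Lx of the swapped x-side equals Ly of the unswapped y-side
  have e2 : Lx (∑ i ∈ X.index, ∑ j ∈ (X1 i).index,
      (X1 i).left j ⊗ₜ[k] ((X1 i).right j ⊗ₜ[k] X.right i)) =
      Ly (∑ p ∈ Y.index, ∑ q ∈ (Y2 p).index,
        Y.left p ⊗ₜ[k] ((Y2 p).left q ⊗ₜ[k] (Y2 p).right q)) := by
    rw [map_sum, map_sum]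
    simp only [map_sum, Lx_apply, Ly_apply]
    rw [sum4_swap X.index Y.index (fun i => (X1 i).index) (fun p => (Y2 p).index)]
    refine Finset.sum_congr rfl (fun p _ => Finset.sum_congr rfl (fun q _ =>
      Finset.sum_congr rfl (fun i _ => Finset.sum_congr rfl (fun j _ => ?_))))
    simp only [mul_assoc]
  -- Route 2 : Ly of the swapped y-side equals 𝒮 y * 𝒮 x
  have e3 : Ly (∑ p ∈ Y.index, ∑ q ∈ (Y1 p).index,
      (Y1 p).left q ⊗ₜ[k] ((Y1 p).right q ⊗ₜ[k] Y.right p)) = 𝒮 y * 𝒮 x := by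
    rw [map_sum]
    simp only [map_sum, Ly_apply]
    have step : ∀ p ∈ Y.index,
        ∑ q ∈ (Y1 p).index, ∑ i ∈ X.index, ∑ j ∈ (X1 i).index,
          𝒮 ((X1 i).left j * (Y1 p).left q) *
            ((X1 i).right j * (((Y1 p).right q * 𝒮 (Y.right p)) * 𝒮 (X.right i))) =
        ∑ i ∈ X.index, (ε (X.left i) * ε (Y.left p)) • (𝒮 (Y.right p) * 𝒮 (X.right i)) := by
      intro p _
      rw [Finset.sum_comm]
      refine Finset.sum_congr rfl (fun i _ => ?_)
      have reassoc : ∀ q ∈ (Y1 p).index, ∀ j ∈ (X1 i).index,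
          𝒮 ((X1 i).left j * (Y1 p).left q) *
            ((X1 i).right j * (((Y1 p).right q * 𝒮 (Y.right p)) * 𝒮 (X.right i))) =
          (𝒮 ((X1 i).left j * (Y1 p).left q) * ((X1 i).right j * (Y1 p).right q)) *
            (𝒮 (Y.right p) * 𝒮 (X.right i)) := by
        intro q _ j _
        simp only [mul_assoc]
      calc ∑ q ∈ (Y1 p).index, ∑ j ∈ (X1 i).index,
            𝒮 ((X1 i).left j * (Y1 p).left q) *
              ((X1 i).right j * (((Y1 p).right q * 𝒮 (Y.right p)) * 𝒮 (X.right i)))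
          = ∑ q ∈ (Y1 p).index, ∑ j ∈ (X1 i).index,
            (𝒮 ((X1 i).left j * (Y1 p).left q) * ((X1 i).right j * (Y1 p).right q)) *
              (𝒮 (Y.right p) * 𝒮 (X.right i)) := by
            exact Finset.sum_congr rfl (fun q hq => Finset.sum_congr rfl
              (fun j hj => reassoc q hq j hj))
        _ = (∑ j ∈ (X1 i).index, ∑ q ∈ (Y1 p).index,
            𝒮 ((X1 i).left j * (Y1 p).left q) * ((X1 i).right j * (Y1 p).right q)) *
              (𝒮 (Y.right p) * 𝒮 (X.right i)) := by
            rw [Finset.sum_comm, Finset.sum_mul]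
            exact Finset.sum_congr rfl (fun j _ => by rw [Finset.sum_mul])
        _ = (ε (X.left i * Y.left p)) • (𝒮 (Y.right p) * 𝒮 (X.right i)) := by
            rw [sum_antipode_mul_prod (X1 i) (Y1 p)]
            simp [smul_mul_assoc]
        _ = (ε (X.left i) * ε (Y.left p)) • (𝒮 (Y.right p) * 𝒮 (X.right i)) := by
            rw [Bialgebra.counit_mul]
    rw [Finset.sum_congr rfl step]
    have : 𝒮 y * 𝒮 x = 𝒮 (∑ p ∈ Y.index, ε (Y.left p) • Y.right p) *
        𝒮 (∑ i ∈ X.index, ε (X.left i) • X.right i) := by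
      rw [repr_counit_left X, repr_counit_left Y]
    rw [this, map_sum, map_sum, Finset.sum_mul]
    simp only [Finset.mul_sum, map_smul, smul_mul_assoc, mul_smul_comm, smul_smul]
  rw [← e1, ← hx, e2, ← hy, e3]


-- ===== part 4 : counit-contraction algebra homs =====
variable (k H)


def epsL : H ⊗[k] H →ₐ[k] H :=
  (Algebra.TensorProduct.lid k H).toAlgHom.comp
    (Algebra.TensorProduct.map (Bialgebra.counitAlgHom k H) (AlgHom.id k H))

def epsR : H ⊗[k] H →ₐ[k] H :=
  (Algebra.TensorProduct.rid k k H).toAlgHom.comp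
    (Algebra.TensorProduct.map (AlgHom.id k H) (Bialgebra.counitAlgHom k H))

def cE1 : H ⊗[k] (H ⊗[k] H) →ₐ[k] H ⊗[k] H :=
  (Algebra.TensorProduct.lid k (H ⊗[k] H)).toAlgHom.comp
    (Algebra.TensorProduct.map (Bialgebra.counitAlgHom k H) (AlgHom.id k (H ⊗[k] H)))

def cE2 : H ⊗[k] (H ⊗[k] H) →ₐ[k] H ⊗[k] H :=
  Algebra.TensorProduct.map (AlgHom.id k H) (epsL k H)

variable {k H}

@[simp] lemma epsL_tmul (x y : H) : epsL k H (x ⊗ₜ[k] y) = ε x • y := rfl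

@[simp] lemma epsR_tmul (x y : H) : epsR k H (x ⊗ₜ[k] y) = ε y • x := rfl

@[simp] lemma cE1_tmul (x : H) (w : H ⊗[k] H) : cE1 k H (x ⊗ₜ[k] w) = ε x • w := rfl

@[simp] lemma cE2_tmul (x : H) (w : H ⊗[k] H) : cE2 k H (x ⊗ₜ[k] w) = x ⊗ₜ[k] epsL k H w := rfl

lemma cE1_DeltaId (z : H ⊗[k] H) : cE1 k H (DeltaId k H z) = z := by
  induction z using TensorProduct.induction_on with
  | zero => simp
  | add u v hu hv => rw [map_add, map_add, hu, hv]
  | tmul a b =>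
    rw [DeltaId]
    simp only [LinearMap.coe_comp, Function.comp_apply, LinearEquiv.coe_coe,
      TensorProduct.map_tmul, LinearMap.id_coe, id_eq]
    rw [show Coalgebra.comul (R := k) a = CoalgebraStruct.comul (R := k) a from rfl, ← (ℛ k a).eq]
    rw [TensorProduct.sum_tmul, map_sum, map_sum]
    simp only [TensorProduct.assoc_tmul, cE1_tmul, TensorProduct.smul_tmul']
    rw [← TensorProduct.sum_tmul, repr_counit_left (ℛ k a)]

lemma cE1_emb13 (p : H ⊗[k] H) :
    cE1 k H (emb13 k H p) = Algebra.TensorProduct.includeRight (epsL k H p) := by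
  induction p using TensorProduct.induction_on with
  | zero => simp
  | add u v hu hv => simp only [map_add, hu, hv]
  | tmul x y =>
    simp [emb13, Algebra.TensorProduct.includeRight_apply, TensorProduct.tmul_smul]

lemma cE1_emb23 (p : H ⊗[k] H) : cE1 k H (emb23 k H p) = p := by
  rw [show emb23 k H p = (1 : H) ⊗ₜ[k] p from rfl, cE1_tmul]
  simp

lemma cE2_IdDelta (z : H ⊗[k] H) : cE2 k H (IdDelta k H z) = z := by
  induction z using TensorProduct.induction_on with
  | zero => simp
  | add u v hu hv => rw [map_add, map_add, hu, hv]
  | tmul a b =>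
    rw [IdDelta]
    simp only [TensorProduct.map_tmul, LinearMap.id_coe, id_eq, cE2_tmul]
    congr 1
    rw [show Coalgebra.comul (R := k) b = CoalgebraStruct.comul (R := k) b from rfl, ← (ℛ k b).eq]
    rw [map_sum]
    simp only [epsL_tmul]
    rw [repr_counit_left (ℛ k b)]

lemma cE2_emb13 (p : H ⊗[k] H) : cE2 k H (emb13 k H p) = p := by
  induction p using TensorProduct.induction_on with
  | zero => simp
  | add u v hu hv => rw [map_add, map_add, hu, hv]
  | tmul x y =>
    simp [emb13, cE2, epsL]

lemma cE2_emb12 (p : H ⊗[k] H) :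
    cE2 k H (emb12 k H p) = Algebra.TensorProduct.includeLeft (S := k) (epsR k H p) := by
  induction p using TensorProduct.induction_on with
  | zero => simp
  | add u v hu hv => simp only [map_add, hu, hv]
  | tmul x y =>
    rw [show cE2 k H (emb12 k H (x ⊗ₜ[k] y)) = x ⊗ₜ[k] ((ε y) • (1:H)) from rfl,
      show (Algebra.TensorProduct.includeLeft (S := k) (epsR k H (x ⊗ₜ[k] y)) : H ⊗[k] H) =
        (ε y • x) ⊗ₜ[k] (1:H) from rfl,
      TensorProduct.tmul_smul, TensorProduct.smul_tmul']

-- unit cancellation helpers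
lemma eq_one_of_mul_unit_right {A : Type*} [Monoid A] {r w : A} (h : IsUnit r)
    (hw : w * r = r) : w = 1 := by
  obtain ⟨u, rfl⟩ := h
  calc w = w * ↑u * ↑u⁻¹ := by rw [mul_assoc, Units.mul_inv, mul_one]
    _ = ↑u * ↑u⁻¹ := by rw [hw]
    _ = 1 := Units.mul_inv u

lemma eq_one_of_unit_mul_left {A : Type*} [Monoid A] {r w : A} (h : IsUnit r)
    (hw : r * w = r) : w = 1 := by
  obtain ⟨u, rfl⟩ := h
  calc w = ↑u⁻¹ * (↑u * w) := by rw [← mul_assoc, Units.inv_mul, one_mul]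
    _ = ↑u⁻¹ * ↑u := by rw [hw]
    _ = 1 := Units.inv_mul u

lemma mul_eq_one_comm_of_isUnit {A : Type*} [Monoid A] {r w : A} (h : IsUnit r)
    (hw : w * r = 1) : r * w = 1 := by
  obtain ⟨u, rfl⟩ := h
  have : w = ↑u⁻¹ := by
    calc w = w * ↑u * ↑u⁻¹ := by rw [mul_assoc, Units.mul_inv, mul_one]
      _ = ↑u⁻¹ := by rw [hw, one_mul]
  rw [this, Units.mul_inv]

lemma epsL_R_eq_one {R : H ⊗[k] H} (hR : IsUniversalRMatrix k H R) : epsL k H R = 1 := by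
  have h := congrArg (cE1 k H) hR.hexagon1
  rw [cE1_DeltaId, map_mul, cE1_emb13, cE1_emb23] at h
  have h2 : Algebra.TensorProduct.includeRight (R := k) (A := H) (epsL k H R) = 1 :=
    eq_one_of_mul_unit_right hR.isUnit h.symm
  have := congrArg (epsL k H) h2
  rwa [map_one, show (Algebra.TensorProduct.includeRight (R := k) (A := H) (epsL k H R)) =
    (1:H) ⊗ₜ[k] (epsL k H R) from rfl, epsL_tmul, Bialgebra.counit_one, one_smul] at this

lemma epsR_R_eq_one {R : H ⊗[k] H} (hR : IsUniversalRMatrix k H R) : epsR k H R = 1 := by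
  have h := congrArg (cE2 k H) hR.hexagon2
  rw [cE2_IdDelta, map_mul, cE2_emb13, cE2_emb12] at h
  have h2 : Algebra.TensorProduct.includeLeft (S := k) (epsR k H R) = (1 : H ⊗[k] H) :=
    eq_one_of_unit_mul_left hR.isUnit h.symm
  have := congrArg (epsR k H) h2
  rwa [map_one, show (Algebra.TensorProduct.includeLeft (S := k) (epsR k H R) : H ⊗[k] H) =
    (epsR k H R) ⊗ₜ[k] (1:H) from rfl, epsR_tmul, Bialgebra.counit_one, one_smul] at this
-- ===== part 5 : (S ⊗ S) R = R =====
variable (k H)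

def Mmap : H ⊗[k] (H ⊗[k] H) →ₗ[k] H ⊗[k] H :=
  (LinearMap.rTensor H ((LinearMap.mul' k H) ∘ₗ (LinearMap.rTensor H 𝒮))) ∘ₗ
    (TensorProduct.assoc k H H H).symm.toLinearMap

def Nmap : H ⊗[k] (H ⊗[k] H) →ₗ[k] H ⊗[k] H :=
  LinearMap.lTensor H ((LinearMap.mul' k H) ∘ₗ (LinearMap.lTensor H 𝒮))

def IdDeltaA : H ⊗[k] H →ₐ[k] H ⊗[k] (H ⊗[k] H) :=
  Algebra.TensorProduct.map (AlgHom.id k H) (Bialgebra.comulAlgHom k H)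

variable {k H}

@[simp] lemma Mmap_tmul (x y z : H) :
    Mmap k H (x ⊗ₜ[k] (y ⊗ₜ[k] z)) = (𝒮 x * y) ⊗ₜ[k] z := by
  simp [Mmap, LinearMap.mul'_apply]

@[simp] lemma Nmap_tmul (x y z : H) :
    Nmap k H (x ⊗ₜ[k] (y ⊗ₜ[k] z)) = x ⊗ₜ[k] (y * 𝒮 z) := by
  simp [Nmap, LinearMap.mul'_apply]

lemma Mmap_emb (p q : H ⊗[k] H) :
    Mmap k H (emb13 k H p * emb23 k H q) = (TensorProduct.map 𝒮 LinearMap.id p) * q := by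
  induction p using TensorProduct.induction_on with
  | zero => simp
  | add u v hu hv => simp only [map_add, add_mul, hu, hv]
  | tmul a b =>
    induction q using TensorProduct.induction_on with
    | zero => simp
    | add u v hu hv => simp only [map_add, mul_add, hu, hv]
    | tmul c d =>
      rw [show emb13 k H (a ⊗ₜ[k] b) = a ⊗ₜ[k] ((1:H) ⊗ₜ[k] b) from rfl,
        show emb23 k H (c ⊗ₜ[k] d) = (1:H) ⊗ₜ[k] (c ⊗ₜ[k] d) from rfl]
      rw [Algebra.TensorProduct.tmul_mul_tmul, Algebra.TensorProduct.tmul_mul_tmul]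
      simp [Algebra.TensorProduct.tmul_mul_tmul, LinearMap.mul'_apply]

lemma Nmap_emb (p q : H ⊗[k] H) :
    Nmap k H (emb12 k H p * emb13 k H q) = p * (TensorProduct.map LinearMap.id 𝒮 q) := by
  induction p using TensorProduct.induction_on with
  | zero => simp
  | add u v hu hv => simp only [map_add, add_mul, hu, hv]
  | tmul a b =>
    induction q using TensorProduct.induction_on with
    | zero => simp
    | add u v hu hv => simp only [map_add, mul_add, hu, hv]
    | tmul c d =>
      rw [show emb12 k H (a ⊗ₜ[k] b) = a ⊗ₜ[k] (b ⊗ₜ[k] (1:H)) from rfl,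
        show emb13 k H (c ⊗ₜ[k] d) = c ⊗ₜ[k] ((1:H) ⊗ₜ[k] d) from rfl]
      rw [Algebra.TensorProduct.tmul_mul_tmul, Algebra.TensorProduct.tmul_mul_tmul]
      simp [Algebra.TensorProduct.tmul_mul_tmul, LinearMap.mul'_apply]

lemma Mmap_DeltaId (z : H ⊗[k] H) :
    Mmap k H (DeltaId k H z) = Algebra.TensorProduct.includeRight (epsL k H z) := by
  induction z using TensorProduct.induction_on with
  | zero => simp
  | add u v hu hv => simp only [map_add, hu, hv]
  | tmul a b =>
    rw [DeltaId]
    simp only [LinearMap.coe_comp, Function.comp_apply, LinearEquiv.coe_coe,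
      TensorProduct.map_tmul, LinearMap.id_coe, id_eq]
    rw [show Coalgebra.comul (R := k) a = CoalgebraStruct.comul (R := k) a from rfl, ← (ℛ k a).eq]
    rw [TensorProduct.sum_tmul, map_sum, map_sum]
    simp only [TensorProduct.assoc_tmul, Mmap_tmul]
    rw [← TensorProduct.sum_tmul, sum_antipode_mul_eq_smul (ℛ k a)]
    rw [show Algebra.TensorProduct.includeRight (epsL k H (a ⊗ₜ[k] b)) =
      (1:H) ⊗ₜ[k] (ε a • b) from rfl]
    rw [TensorProduct.smul_tmul, TensorProduct.tmul_smul]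

lemma Nmap_IdDelta (z : H ⊗[k] H) :
    Nmap k H (IdDelta k H z) = Algebra.TensorProduct.includeLeft (S := k) (epsR k H z) := by
  induction z using TensorProduct.induction_on with
  | zero => simp
  | add u v hu hv => simp only [map_add, hu, hv]
  | tmul a b =>
    rw [IdDelta]
    simp only [TensorProduct.map_tmul, LinearMap.id_coe, id_eq]
    rw [show Coalgebra.comul (R := k) b = CoalgebraStruct.comul (R := k) b from rfl, ← (ℛ k b).eq]
    rw [TensorProduct.tmul_sum, map_sum]
    simp only [Nmap_tmul]
    rw [← TensorProduct.tmul_sum, sum_mul_antipode_eq_smul (ℛ k b)]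
    rw [show (Algebra.TensorProduct.includeLeft (S := k) (epsR k H (a ⊗ₜ[k] b)) : H ⊗[k] H) =
      (ε b • a) ⊗ₜ[k] (1:H) from rfl]
    rw [TensorProduct.tmul_smul, TensorProduct.smul_tmul']

lemma SR_mul_R {R : H ⊗[k] H} (hR : IsUniversalRMatrix k H R) :
    (TensorProduct.map 𝒮 LinearMap.id) R * R = 1 := by
  have h := congrArg (Mmap k H) hR.hexagon1
  rw [Mmap_DeltaId, Mmap_emb, epsL_R_eq_one hR, map_one] at h
  exact h.symm

lemma R_mul_SR {R : H ⊗[k] H} (hR : IsUniversalRMatrix k H R) :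
    R * (TensorProduct.map 𝒮 LinearMap.id) R = 1 :=
  mul_eq_one_comm_of_isUnit hR.isUnit (SR_mul_R hR)

lemma IdDeltaA_eq (z : H ⊗[k] H) : IdDeltaA k H z = IdDelta k H z := by
  induction z using TensorProduct.induction_on with
  | zero => simp
  | add u v hu hv => simp only [map_add, hu, hv]
  | tmul a b => rfl

lemma IdDelta_inv {R : H ⊗[k] H} (hR : IsUniversalRMatrix k H R) :
    IdDelta k H ((TensorProduct.map 𝒮 LinearMap.id) R) =
      emb12 k H ((TensorProduct.map 𝒮 LinearMap.id) R) *
        emb13 k H ((TensorProduct.map 𝒮 LinearMap.id) R) := by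
  set R' := (TensorProduct.map 𝒮 LinearMap.id) R with hR'
  have hA : IdDeltaA k H R * IdDeltaA k H R' = 1 := by
    rw [← map_mul, R_mul_SR hR, map_one]
  have hL : (emb12 k H R' * emb13 k H R') * (emb13 k H R * emb12 k H R) = 1 := by
    calc (emb12 k H R' * emb13 k H R') * (emb13 k H R * emb12 k H R)
        = emb12 k H R' * ((emb13 k H R' * emb13 k H R) * emb12 k H R) := by
          simp only [mul_assoc]
      _ = emb12 k H R' * emb12 k H R := by
          rw [← map_mul, SR_mul_R hR, map_one, one_mul]
      _ = 1 := by rw [← map_mul, SR_mul_R hR, map_one]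
  have hhex : IdDeltaA k H R = emb13 k H R * emb12 k H R := by
    rw [IdDeltaA_eq]; exact hR.hexagon2
  calc IdDelta k H R' = IdDeltaA k H R' := (IdDeltaA_eq R').symm
    _ = ((emb12 k H R' * emb13 k H R') * IdDeltaA k H R) * IdDeltaA k H R' := by
        have h1 : (emb12 k H R' * emb13 k H R') * IdDeltaA k H R = 1 := by
          rw [hhex]; exact hL
        rw [h1, one_mul]
    _ = (emb12 k H R' * emb13 k H R') * (IdDeltaA k H R * IdDeltaA k H R') := by
        rw [mul_assoc]
    _ = emb12 k H R' * emb13 k H R' := by rw [hA, mul_one]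

lemma epsR_SR {R : H ⊗[k] H} (hR : IsUniversalRMatrix k H R) :
    epsR k H ((TensorProduct.map 𝒮 LinearMap.id) R) = 1 := by
  have h : epsR k H ((TensorProduct.map 𝒮 LinearMap.id) R) * epsR k H R = 1 := by
    rw [← map_mul, SR_mul_R hR, map_one]
  rwa [epsR_R_eq_one hR, mul_one] at h

lemma mapSS_R {R : H ⊗[k] H} (hR : IsUniversalRMatrix k H R) :
    (TensorProduct.map 𝒮 𝒮) R = R := by
  set R' := (TensorProduct.map 𝒮 LinearMap.id) R with hR'def
  have h := congrArg (Nmap k H) (IdDelta_inv hR)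
  rw [Nmap_IdDelta, Nmap_emb, epsR_SR hR, map_one] at h
  -- h : 1 = R' * (map id 𝒮) R'
  have hW : (TensorProduct.map LinearMap.id 𝒮) R' = R := by
    calc (TensorProduct.map LinearMap.id 𝒮) R'
        = (R * R') * (TensorProduct.map LinearMap.id 𝒮) R' := by rw [R_mul_SR hR, one_mul]
      _ = R * (R' * (TensorProduct.map LinearMap.id 𝒮) R') := by rw [mul_assoc]
      _ = R := by rw [← h, mul_one]
  have hcomp : ∀ z : H ⊗[k] H, (TensorProduct.map LinearMap.id 𝒮)
      ((TensorProduct.map 𝒮 LinearMap.id) z) = (TensorProduct.map 𝒮 𝒮) z := by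
    intro z
    induction z using TensorProduct.induction_on with
    | zero => simp
    | add u v hu hv => simp only [map_add, hu, hv]
    | tmul a b => rfl
  rw [hR'def, hcomp] at hW
  exact hW

-- ===== part 6 : the u operator =====
variable (k H)

def Lmap : H ⊗[k] H →ₗ[k] H :=
  (LinearMap.mul' k H) ∘ₗ (TensorProduct.map 𝒮 LinearMap.id) ∘ₗ (tau k H)

def sandw (z : H) : H ⊗[k] H →ₗ[k] H :=
  (LinearMap.mul' k H) ∘ₗ
    (LinearMap.rTensor H (LinearMap.mulRight k z ∘ₗ 𝒮)) ∘ₗ (tau k H)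

variable {k H}

@[simp] lemma Lmap_tmul (x y : H) : Lmap k H (x ⊗ₜ[k] y) = 𝒮 y * x := by
  simp [Lmap, tau, LinearMap.mul'_apply]

@[simp] lemma sandw_tmul (z c d : H) : sandw k H z (c ⊗ₜ[k] d) = 𝒮 d * z * c := by
  simp [sandw, tau, LinearMap.mul'_apply]

lemma uOp_eq_Lmap (R : H ⊗[k] H) : uOp k H R = Lmap k H R := rfl

lemma Lmap_mul (p q : H ⊗[k] H) : Lmap k H (p * q) = sandw k H (Lmap k H p) q := by
  induction q using TensorProduct.induction_on with
  | zero => simp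
  | add u v hu hv => simp only [mul_add, map_add, hu, hv]
  | tmul c d =>
    rw [sandw_tmul]
    induction p using TensorProduct.induction_on with
    | zero => simp
    | add u v hu hv => simp only [add_mul, map_add, hu, hv, mul_add]
    | tmul x y =>
      rw [Algebra.TensorProduct.tmul_mul_tmul, Lmap_tmul, Lmap_tmul, antipode_mul']
      simp only [mul_assoc]

lemma Lmap_DeltaT_mul (a : H) (p : H ⊗[k] H) :
    Lmap k H (DeltaT k H a * p) = ε a • Lmap k H p := by
  induction p using TensorProduct.induction_on with
  | zero => simp
  | add u v hu hv => simp only [mul_add, map_add, hu, hv, smul_add]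
  | tmul x y =>
    rw [DeltaT, LinearMap.comp_apply]
    rw [show Coalgebra.comul (R := k) a = CoalgebraStruct.comul (R := k) a from rfl, ← (ℛ k a).eq]
    rw [map_sum, Finset.sum_mul, map_sum]
    simp only [tau, LinearEquiv.coe_coe, TensorProduct.comm_tmul,
      Algebra.TensorProduct.tmul_mul_tmul, Lmap_tmul, antipode_mul']
    have hterm : ∀ i ∈ (ℛ k a).index,
        𝒮 y * 𝒮 ((ℛ k a).left i) * ((ℛ k a).right i * x)
        = 𝒮 y * ((𝒮 ((ℛ k a).left i) * (ℛ k a).right i) * x) := by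
      intro i _
      simp only [mul_assoc]
    rw [Finset.sum_congr rfl hterm, ← Finset.mul_sum, ← Finset.sum_mul,
      sum_antipode_mul_eq_smul (ℛ k a)]
    simp [smul_mul_assoc, mul_smul_comm, mul_assoc]

lemma star_eq {R : H ⊗[k] H} (hR : IsUniversalRMatrix k H R) (a : H) :
    ε a • uOp k H R = sandw k H (uOp k H R) (Coalgebra.comul a) := by
  have h := congrArg (Lmap k H) (hR.intertwine a)
  rw [Lmap_mul, Lmap_DeltaT_mul] at h
  rw [uOp_eq_Lmap]
  exact h.symm

lemma u_mul {R : H ⊗[k] H} (hR : IsUniversalRMatrix k H R) (a : H) :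
    uOp k H R * a = 𝒮 (𝒮 a) * uOp k H R := by
  classical
  set u := uOp k H R with hu
  set X := ℛ k a with hX
  set X1 : (i : X.ι) → Repr k (X.left i) (H × H) := fun i => ℛ k (X.left i) with hX1
  set X2 : (i : X.ι) → Repr k (X.right i) (H × H) := fun i => ℛ k (X.right i) with hX2
  set Phi : H ⊗[k] (H ⊗[k] H) →ₗ[k] H :=
    (LinearMap.mul' k H) ∘ₗ
      (TensorProduct.map (LinearMap.mulRight k u ∘ₗ 𝒮 ∘ₗ (LinearMap.mul' k H) ∘ₗ
        (LinearMap.lTensor H 𝒮)) LinearMap.id) ∘ₗ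
      (TensorProduct.comm k H (H ⊗[k] H)).toLinearMap with hPhi
  have Phi_tmul : ∀ x y z : H, Phi (x ⊗ₜ[k] (y ⊗ₜ[k] z)) = 𝒮 (y * 𝒮 z) * (u * x) := by
    intro x y z
    simp [hPhi, LinearMap.mul'_apply, mul_assoc]
  have key := sum_tmul_tmul_eq X X1 X2
  have eL : Phi (∑ i ∈ X.index, ∑ j ∈ (X2 i).index,
      X.left i ⊗ₜ[k] ((X2 i).left j ⊗ₜ[k] (X2 i).right j)) = u * a := by
    rw [map_sum]
    simp only [map_sum, Phi_tmul]
    have inner : ∀ i ∈ X.index, ∑ j ∈ (X2 i).index,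
        𝒮 ((X2 i).left j * 𝒮 ((X2 i).right j)) * (u * X.left i) =
        ε (X.right i) • (u * X.left i) := by
      intro i _
      rw [← Finset.sum_mul, ← map_sum, sum_mul_antipode_eq_smul (X2 i)]
      rw [map_smul, antipode_one', smul_mul_assoc, one_mul]
    rw [Finset.sum_congr rfl inner]
    rw [show (u * a) = u * (∑ i ∈ X.index, ε (X.right i) • X.left i) from by
      rw [repr_counit_right X]]
    rw [Finset.mul_sum]
    exact Finset.sum_congr rfl (fun i _ => (mul_smul_comm _ _ _).symm)
  have eR : Phi (∑ i ∈ X.index, ∑ j ∈ (X1 i).index,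
      (X1 i).left j ⊗ₜ[k] ((X1 i).right j ⊗ₜ[k] X.right i)) = 𝒮 (𝒮 a) * u := by
    rw [map_sum]
    simp only [map_sum, Phi_tmul]
    have inner : ∀ i ∈ X.index, ∑ j ∈ (X1 i).index,
        𝒮 ((X1 i).right j * 𝒮 (X.right i)) * (u * (X1 i).left j) =
        ε (X.left i) • (𝒮 (𝒮 (X.right i)) * u) := by
      intro i _
      have term : ∀ j ∈ (X1 i).index,
          𝒮 ((X1 i).right j * 𝒮 (X.right i)) * (u * (X1 i).left j) =
          𝒮 (𝒮 (X.right i)) * (𝒮 ((X1 i).right j) * u * (X1 i).left j) := by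
        intro j _
        rw [antipode_mul']
        simp only [mul_assoc]
      rw [Finset.sum_congr rfl term, ← Finset.mul_sum]
      have hs : ∑ j ∈ (X1 i).index, 𝒮 ((X1 i).right j) * u * (X1 i).left j =
          sandw k H u (Coalgebra.comul (X.left i)) := by
        rw [show Coalgebra.comul (R := k) (X.left i) =
          CoalgebraStruct.comul (R := k) (X.left i) from rfl, ← (X1 i).eq, map_sum]
        simp only [sandw_tmul]
      rw [hs, ← star_eq hR, mul_smul_comm]
    rw [Finset.sum_congr rfl inner]
    rw [show 𝒮 (𝒮 a) = 𝒮 (𝒮 (∑ i ∈ X.index, ε (X.left i) • X.right i)) from by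
      rw [repr_counit_left X]]
    rw [map_sum, map_sum, Finset.sum_mul]
    simp [smul_mul_assoc]
  rw [← eL, ← key, eR]

-- ===== part 7 : final assembly lemmas =====

lemma mapSS_antimul (p q : H ⊗[k] H) :
    (TensorProduct.map 𝒮 𝒮) (p * q) =
      (TensorProduct.map 𝒮 𝒮) q * (TensorProduct.map 𝒮 𝒮) p := by
  induction p using TensorProduct.induction_on with
  | zero => simp
  | add u v hu hv => simp only [map_add, add_mul, mul_add, hu, hv]
  | tmul a b =>
    induction q using TensorProduct.induction_on with
    | zero => simp
    | add u v hu hv => simp only [map_add, add_mul, mul_add, hu, hv]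
    | tmul c d =>
      simp only [Algebra.TensorProduct.tmul_mul_tmul, TensorProduct.map_tmul, antipode_mul']

lemma mapSS_tau (z : H ⊗[k] H) :
    (TensorProduct.map 𝒮 𝒮) (tau k H z) = tau k H ((TensorProduct.map 𝒮 𝒮) z) := by
  induction z using TensorProduct.induction_on with
  | zero => simp
  | add u v hu hv => simp only [map_add, hu, hv]
  | tmul a b => rfl

variable (k H)

/-- `u ⊗ u` commutes with `τ(R)·R` in `H ⊗ H`. -/
theorem uOp_tmul_comm_RTR (R : H ⊗[k] H) (hR : IsUniversalRMatrix k H R) :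
    (uOp k H R ⊗ₜ[k] uOp k H R) * (tau k H R * R) =
      (tau k H R * R) * (uOp k H R ⊗ₜ[k] uOp k H R) := by
  have hSS := mapSS_R hR
  have h1 : (TensorProduct.map 𝒮 𝒮) (tau k H R * R) = R * tau k H R := by
    rw [mapSS_antimul, hSS, mapSS_tau, hSS]
  have h2 : (TensorProduct.map 𝒮 𝒮) (R * tau k H R) = tau k H R * R := by
    rw [mapSS_antimul, mapSS_tau, hSS]
  have hcomm : ∀ z : H ⊗[k] H, (uOp k H R ⊗ₜ[k] uOp k H R) * z =
      (TensorProduct.map 𝒮 𝒮) ((TensorProduct.map 𝒮 𝒮) z) * (uOp k H R ⊗ₜ[k] uOp k H R) := by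
    intro z
    induction z using TensorProduct.induction_on with
    | zero => simp
    | add p q hp hq => simp only [map_add, mul_add, add_mul, hp, hq]
    | tmul x y =>
      rw [Algebra.TensorProduct.tmul_mul_tmul, TensorProduct.map_tmul, TensorProduct.map_tmul,
        Algebra.TensorProduct.tmul_mul_tmul, u_mul hR x, u_mul hR y]
  rw [hcomm (tau k H R * R), h1, h2]
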